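/- In an exchange economy with locally non-satiated utilities, any Walrasian equilibrium allocation lies in the core: no coalition c of agents can find an allocation y_c feasible for c (Σ_{n∈c} y_n ≤ Σ_{n∈c} q_n) such that u_n(y_n) ≥ u_n(x̄_n) for all n ∈ c with strict inequality for some n ∈ c. -/

import Mathlib

open Finset

theorem walrasian_equilibrium_in_core
    (N M : ℕ)
    (q : Fin N → Fin M → ℝ) (hq : ∀ n m, 0 ≤ q n m)
    (u : Fin N → (Fin M → ℝ) → ℝ)
    (p : Fin M → ℝ) (hp : ∀ m, 0 < p m)
    (xbar : Fin N → Fin M → ℝ) (hx : ∀ n m, 0 ≤ xbar n m)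
    (hlns : ∀ n (z : Fin M → ℝ), (∀ m, 0 ≤ z m) → ∀ ε : ℝ, 0 < ε →
      ∃ y : Fin M → ℝ, (∀ m, 0 ≤ y m) ∧ ‖y - z‖ ≤ ε ∧ u n z < u n y)
    (hbudget : ∀ n, ∑ m, p m * xbar n m ≤ ∑ m, p m * q n m)
    (hmax : ∀ n (y : Fin M → ℝ), (∀ m, 0 ≤ y m) →
      ∑ m, p m * y m ≤ ∑ m, p m * q n m → u n y ≤ u n (xbar n))
    (hclear : ∀ m, ∑ n, xbar n m = ∑ n, q n m) :
    ¬ ∃ (c : Finset (Fin N)) (y : Fin N → Fin M → ℝ),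
        c.Nonempty ∧
        (∀ n ∈ c, ∀ m, 0 ≤ y n m) ∧
        (∀ m, ∑ n ∈ c, y n m ≤ ∑ n ∈ c, q n m) ∧
        (∀ n ∈ c, u n (xbar n) ≤ u n (y n)) ∧
        (∃ n ∈ c, u n (xbar n) < u n (y n)) := by
  rintro ⟨c, y, -, hynn, hfeas, hweak, n₀, hn₀, hstrict⟩
  -- weak preference implies cost at least wealth
  have key : ∀ n ∈ c, ∑ m, p m * q n m ≤ ∑ m, p m * y n m := by
    intro n hn
    by_contra h
    push_neg at h
    set S : ℝ := ∑ m, p m with hS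
    have hS0 : 0 ≤ S := Finset.sum_nonneg fun m _ => (hp m).le
    set ε : ℝ := (∑ m, p m * q n m - ∑ m, p m * y n m) / (S + 1) with hε
    have hεpos : 0 < ε := div_pos (by linarith) (by linarith)
    obtain ⟨y', hy'nn, hy'near, hy'lt⟩ := hlns n (y n) (hynn n hn) ε hεpos
    have hcost : ∑ m, p m * y' m ≤ ∑ m, p m * q n m := by
      have h1 : ∀ m, p m * y' m ≤ p m * y n m + p m * ε := by
        intro m
        have := norm_le_pi_norm (y' - y n) m
        have h2 : |y' m - y n m| ≤ ε := le_trans this hy'near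
        have h3 : y' m ≤ y n m + ε := by
          rcases abs_le.mp h2 with ⟨_, h4⟩
          linarith
        nlinarith [(hp m).le]
      calc ∑ m, p m * y' m ≤ ∑ m, (p m * y n m + p m * ε) :=
            Finset.sum_le_sum fun m _ => h1 m
        _ = (∑ m, p m * y n m) + S * ε := by
            rw [Finset.sum_add_distrib, ← Finset.sum_mul]
        _ ≤ (∑ m, p m * y n m) + (S + 1) * ε := by nlinarith
        _ = ∑ m, p m * q n m := by
            rw [hε]; field_simp; ring
    have := hmax n y' hy'nn hcost
    have := hweak n hn
    linarith
  -- strict preference implies cost strictly above wealth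
  have keyn₀ : ∑ m, p m * q n₀ m < ∑ m, p m * y n₀ m := by
    by_contra h
    push_neg at h
    exact absurd (hmax n₀ (y n₀) (hynn n₀ hn₀) h) (not_le.mpr hstrict)
  have hsum : ∑ n ∈ c, ∑ m, p m * q n m < ∑ n ∈ c, ∑ m, p m * y n m :=
    Finset.sum_lt_sum key ⟨n₀, hn₀, keyn₀⟩
  have hsum2 : ∑ n ∈ c, ∑ m, p m * y n m ≤ ∑ n ∈ c, ∑ m, p m * q n m := by
    rw [Finset.sum_comm, Finset.sum_comm (s := c)]
    refine Finset.sum_le_sum fun m _ => ?_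
    rw [← Finset.mul_sum, ← Finset.mul_sum]
    exact mul_le_mul_of_nonneg_left (hfeas m) (hp m).le
  linarith
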